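/- arXiv:0708.4188 — 5 statements merged into one kernel-verified Lean document; each statement's English description precedes it below -/
import Mathlib

section
/- Let r, s ≥ 1 be integers and define b₀ := (r+2)(s+1)(s+r+1)(2rs+2s+1)(rs+s+2)(rs+s+6)/6 and b₁ := (r+1)s·( 2s²(s+1)r⁴ + s(2s³+12s²+23s+9)r³ + (8s⁴+39s³+75s²+46s+10)r² + (10s⁴+59s³+108s²+89s+26)r + 4s⁴+30s³+64s²+58s+12 ). Then b₀ ≤ b₁. -/
/-- The δ₀-coefficient of the Gieseker–Petri divisor is at most the δ₁-coefficient: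
`b₀ ≤ b₁` for all integers `r, s ≥ 1`. -/
theorem b0_le_b1 (r' s' : ℤ) (hr : 1 ≤ r') (hs : 1 ≤ s')
    (r s b₀ b₁ : ℚ) (hrq : r = (r' : ℚ)) (hsq : s = (s' : ℚ))
    (hb₀ : b₀ = (r+2)*(s+1)*(s+r+1)*(2*r*s+2*s+1)*(r*s+s+2)*(r*s+s+6)/6)
    (hb₁ : b₁ = (r+1)*s*(2*s^2*(s+1)*r^4 + s*(2*s^3+12*s^2+23*s+9)*r^3
      + (8*s^4+39*s^3+75*s^2+46*s+10)*r^2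
      + (10*s^4+59*s^3+108*s^2+89*s+26)*r
      + 4*s^4+30*s^3+64*s^2+58*s+12)) :
    b₀ ≤ b₁ := by
  have hA : (0:ℚ) ≤ r - 1 := by
    rw [hrq]; simpa using (by exact_mod_cast hr : (1:ℚ) ≤ (r':ℚ))
  have hB : (0:ℚ) ≤ s - 1 := by
    rw [hsq]; simpa using (by exact_mod_cast hs : (1:ℚ) ≤ (s':ℚ))
  set A := r - 1 with hAdef
  set B := s - 1 with hBdef
  have key : 6*(b₁ - b₀) =
      5376 * A^0 * B^0
      + 16608 * A^0 * B^1
      + 19032 * A^0 * B^2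
      + 10188 * A^0 * B^3
      + 2556 * A^0 * B^4
      + 240 * A^0 * B^5
      + 9600 * A^1 * B^0
      + 29512 * A^1 * B^1
      + 34060 * A^1 * B^2
      + 18408 * A^1 * B^3
      + 4640 * A^1 * B^4
      + 440 * A^1 * B^5
      + 6562 * A^2 * B^0
      + 20387 * A^2 * B^1
      + 23855 * A^2 * B^2
      + 12985 * A^2 * B^3
      + 3243 * A^2 * B^4
      + 300 * A^2 * B^5
      + 2152 * A^3 * B^0
      + 6850 * A^3 * B^1
      + 8173 * A^3 * B^2
      + 4466 * A^3 * B^3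
      + 1081 * A^3 * B^4
      + 90 * A^3 * B^5
      + 338 * A^4 * B^0
      + 1117 * A^4 * B^1
      + 1370 * A^4 * B^2
      + 751 * A^4 * B^3
      + 170 * A^4 * B^4
      + 10 * A^4 * B^5
      + 20 * A^5 * B^0
      + 70 * A^5 * B^1
      + 90 * A^5 * B^2
      + 50 * A^5 * B^3
      + 10 * A^5 * B^4 := by
    have hr' : r = A + 1 := by rw [hAdef]; ring
    have hs' : s = B + 1 := by rw [hBdef]; ring
    rw [hb₀, hb₁, hr', hs']; ring
  have h6 : (0:ℚ) ≤ 6*(b₁ - b₀) := by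
    rw [key]
    repeat' apply add_nonneg
    all_goals exact
      mul_nonneg (mul_nonneg (by norm_num) (pow_nonneg hA _)) (pow_nonneg hB _)
  linarith
end

section
/- Let k ∈ {3, 4, 5}, let g ≥ 2 be an integer, and let n be the least integer with 2n ≥ g + k + 2 (i.e. n = ⌈(g+k+2)/2⌉). Set δ := (n−1)(n−2)/2 − (n−k)(n−k−1)/2 − g. Then n(n+3)/2 − (n−k+1)(n−k)/2 − 3δ ≥ 0. -/
/-- Segre's virtual dimension inequality: for `k ∈ {3,4,5}`, `g ≥ 2`, and `n` the
least integer with `2n ≥ g + k + 2`, setting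
`δ = (n-1)(n-2)/2 - (n-k)(n-k-1)/2 - g`, one has
`n(n+3)/2 - (n-k+1)(n-k)/2 - 3δ ≥ 0`. -/
theorem segre_virtual_dim (k g n : ℤ) (hk : k = 3 ∨ k = 4 ∨ k = 5) (hg : 2 ≤ g)
    (hn1 : g + k + 2 ≤ 2 * n) (hn2 : ∀ m : ℤ, g + k + 2 ≤ 2 * m → n ≤ m) :
    (0 : ℚ) ≤ (n : ℚ) * (n + 3) / 2 - ((n : ℚ) - k + 1) * ((n : ℚ) - k) / 2 -
      3 * (((n : ℚ) - 1) * ((n : ℚ) - 2) / 2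
        - ((n : ℚ) - k) * ((n : ℚ) - k - 1) / 2 - (g : ℚ)) := by
  have hub : 2 * n ≤ g + k + 3 := by
    by_contra h
    push_neg at h
    have := hn2 (n - 1) (by linarith)
    linarith
  have hubQ : (2 : ℚ) * n ≤ (g : ℚ) + k + 3 := by exact_mod_cast hub
  have hgQ : (2 : ℚ) ≤ (g : ℚ) := by exact_mod_cast hg
  rcases hk with h | h | h <;> subst h <;> push_cast at hubQ ⊢ <;> ring_nf <;> linarith [hubQ, hgQ]
end

section
/- Fix integers r ≥ 1, s ≥ 1. For a tuple (i₁, …, i_{r+1}) of non-negative integers with s + r + i_j − j ≥ 0 for all j, define F(i₁, …, i_{r+1}) := ( ∏_{1 ≤ l < j ≤ r+1} (i_l − i_j + j − l) ) / ( ∏_{j=1}^{r+1} (s + r + i_j − j)! ), a rational number. Then F(2, 1, 1, …, 1, 0) = ( r(r+2)s / (s+r+1) ) · F(1, 1, …, 1), where in the first argument the middle entries (positions 2 through r) are all 1. -/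
open Finset

-- product over pairs restricted to (0, j) with j ≠ r
lemma ht_aux_snd (r : ℕ) (g : ℕ → ℚ) :
    ∏ p ∈ Finset.univ.filter (fun p : Fin (r + 1) × Fin (r + 1) => p.1 < p.2),
      (if p.1.val = 0 ∧ p.2.val ≠ r then g p.2.val else 1) = ∏ j ∈ Finset.Ico 1 r, g j := by
  rw [← Finset.prod_filter, Finset.filter_filter]
  refine Finset.prod_nbij' (fun p => p.2.val)
    (fun m => ((⟨0, by omega⟩ : Fin (r+1)), (⟨m % (r+1), Nat.mod_lt _ (by omega)⟩ : Fin (r+1))))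
    ?_ ?_ ?_ ?_ ?_
  · rintro ⟨a, b⟩ hp
    simp only [Finset.mem_filter, Finset.mem_univ, true_and] at hp
    simp only [Finset.mem_Ico]
    obtain ⟨hlt, h0, hne⟩ := hp
    have : a.val < b.val := hlt
    have : b.val < r + 1 := b.isLt
    omega
  · intro m hm
    simp only [Finset.mem_Ico] at hm
    have hmod : m % (r+1) = m := Nat.mod_eq_of_lt (by omega)
    simp only [Finset.mem_filter, Finset.mem_univ, true_and]
    exact ⟨Fin.mk_lt_mk.mpr (by omega), by omega⟩
  · rintro ⟨a, b⟩ hp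
    simp only [Finset.mem_filter, Finset.mem_univ, true_and] at hp
    obtain ⟨hlt, h0, hne⟩ := hp
    have hb : b.val % (r+1) = b.val := Nat.mod_eq_of_lt b.isLt
    ext <;> simp [hb, h0.symm]
  · intro m hm
    simp only [Finset.mem_Ico] at hm
    simp [Nat.mod_eq_of_lt (by omega : m < r + 1)]
  · intro p hp; rfl

-- product over pairs restricted to (l, r) with l ≠ 0
lemma ht_aux_fst (r : ℕ) (g : ℕ → ℚ) :
    ∏ p ∈ Finset.univ.filter (fun p : Fin (r + 1) × Fin (r + 1) => p.1 < p.2),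
      (if p.1.val ≠ 0 ∧ p.2.val = r then g p.1.val else 1) = ∏ l ∈ Finset.Ico 1 r, g l := by
  rw [← Finset.prod_filter, Finset.filter_filter]
  refine Finset.prod_nbij' (fun p => p.1.val)
    (fun m => ((⟨m % (r+1), Nat.mod_lt _ (by omega)⟩ : Fin (r+1)), (⟨r, by omega⟩ : Fin (r+1))))
    ?_ ?_ ?_ ?_ ?_
  · rintro ⟨a, b⟩ hp
    simp only [Finset.mem_filter, Finset.mem_univ, true_and] at hp
    simp only [Finset.mem_Ico]
    obtain ⟨hlt, h0, hbr⟩ := hp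
    have : a.val < b.val := hlt
    omega
  · intro m hm
    simp only [Finset.mem_Ico] at hm
    have hmod : m % (r+1) = m := Nat.mod_eq_of_lt (by omega)
    simp only [Finset.mem_filter, Finset.mem_univ, true_and]
    exact ⟨Fin.mk_lt_mk.mpr (by omega), by omega, trivial⟩
  · rintro ⟨a, b⟩ hp
    simp only [Finset.mem_filter, Finset.mem_univ, true_and] at hp
    obtain ⟨hlt, h0, hbr⟩ := hp
    ext
    · exact Nat.mod_eq_of_lt a.isLt
    · exact hbr.symm
  · intro m hm
    simp only [Finset.mem_Ico] at hm
    simp [Nat.mod_eq_of_lt (by omega : m < r + 1)]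
  · intro p hp; rfl

-- single point product at (0, r)
lemma ht_aux_pt (r : ℕ) (hr : 1 ≤ r) (c : ℚ) :
    ∏ p ∈ Finset.univ.filter (fun p : Fin (r + 1) × Fin (r + 1) => p.1 < p.2),
      (if p.1.val = 0 ∧ p.2.val = r then c else 1) = c := by
  rw [Finset.prod_eq_single_of_mem ((⟨0, by omega⟩ : Fin (r+1)), (⟨r, by omega⟩ : Fin (r+1)))]
  · simp
  · simp only [Finset.mem_filter, Finset.mem_univ, true_and]
    exact Fin.mk_lt_mk.mpr (by omega)
  · rintro ⟨a, b⟩ hp hne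
    rw [if_neg]
    rintro ⟨h0, hbr⟩
    exact hne (by apply Prod.ext <;> apply Fin.ext <;> assumption)

lemma ht_prod_add_two (n : ℕ) : ∏ j ∈ Finset.range n, (j + 2) = (n + 1).factorial := by
  induction n with
  | zero => simp
  | succ n ih => rw [Finset.prod_range_succ, ih, Nat.factorial_succ (n + 1)]; ring

lemma ht_prod_Ico_id (r : ℕ) (hr : 1 ≤ r) : ∏ j ∈ Finset.Ico 1 r, j = (r - 1).factorial := by
  have h : r = (r - 1) + 1 := by omega
  conv_lhs => rw [h]
  rw [Finset.prod_Ico_id_eq_factorial]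

lemma ht_prod_Ico_succ (r : ℕ) (hr : 1 ≤ r) :
    ∏ j ∈ Finset.Ico 1 r, (j + 1) = r.factorial := by
  rw [Finset.prod_Ico_eq_prod_range]
  have h : ∀ i ∈ Finset.range (r - 1), 1 + i + 1 = i + 2 := by intros; omega
  rw [Finset.prod_congr rfl h, ht_prod_add_two]
  congr 1; omega

lemma ht_prod_Ico_sub (r : ℕ) (hr : 1 ≤ r) :
    ∏ l ∈ Finset.Ico 1 r, (r - l) = (r - 1).factorial := by
  rw [Finset.prod_Ico_eq_prod_range]
  have h : ∀ i ∈ Finset.range (r - 1), r - (1 + i) = (r - 1) - 1 - i + 1 := by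
    intro i hi; simp only [Finset.mem_range] at hi; omega
  rw [Finset.prod_congr rfl h, Finset.prod_range_reflect (fun j => j + 1) (r - 1),
    Finset.prod_range_add_one_eq_factorial]

lemma ht_prod_Ico_sub_succ (r : ℕ) (hr : 1 ≤ r) :
    ∏ l ∈ Finset.Ico 1 r, (r - l + 1) = r.factorial := by
  rw [Finset.prod_Ico_eq_prod_range]
  have h : ∀ i ∈ Finset.range (r - 1), r - (1 + i) + 1 = (r - 1) - 1 - i + 2 := by
    intro i hi; simp only [Finset.mem_range] at hi; omega
  rw [Finset.prod_congr rfl h, Finset.prod_range_reflect (fun j => j + 2) (r - 1),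
    ht_prod_add_two]
  congr 1; omega

/-- Harris–Tu intersection number identity:
`F(2,1,…,1,0) = (r(r+2)s/(s+r+1)) · F(1,…,1)`, where
`F(i) = (∏_{l<j} (i_l - i_j + j - l)) / (∏_j (s+r+i_j-j)!)`. -/
theorem harris_tu_x1sq (r s : ℕ) (hr : 1 ≤ r) (hs : 1 ≤ s)
    (F : (Fin (r + 1) → ℕ) → ℚ)
    (hF : ∀ i : Fin (r + 1) → ℕ,
      F i = (∏ p ∈ Finset.univ.filter (fun p : Fin (r + 1) × Fin (r + 1) => p.1 < p.2),
          ((i p.1 : ℚ) - (i p.2 : ℚ) + (p.2.val : ℚ) - (p.1.val : ℚ))) /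
        ∏ j : Fin (r + 1), ((Nat.factorial (s + r + i j - (j.val + 1)) : ℚ))) :
    F (fun j => if j.val = 0 then 2 else if j.val = r then 0 else 1) =
      ((r : ℚ) * (r + 2) * s / (s + r + 1)) * F (fun _ => 1) := by
  have hrQ : (r : ℚ) ≠ 0 := Nat.cast_ne_zero.mpr (by omega)
  rw [hF, hF]
  -- numerator identity
  have key : ∀ p ∈ (Finset.univ.filter (fun p : Fin (r+1) × Fin (r+1) => p.1 < p.2)),
      (((if p.1.val = 0 then (2:ℕ) else if p.1.val = r then 0 else 1 : ℕ) : ℚ)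
          - ((if p.2.val = 0 then (2:ℕ) else if p.2.val = r then 0 else 1 : ℕ) : ℚ)
          + (p.2.val : ℚ) - (p.1.val : ℚ))
        * (if p.1.val = 0 ∧ p.2.val = r then (r:ℚ) else 1)
        * (if p.1.val = 0 ∧ p.2.val ≠ r then (p.2.val:ℚ) else 1)
        * (if p.1.val ≠ 0 ∧ p.2.val = r then (r:ℚ) - (p.1.val:ℚ) else 1)
      = (((1:ℕ):ℚ) - ((1:ℕ):ℚ) + (p.2.val : ℚ) - (p.1.val : ℚ))
        * (if p.1.val = 0 ∧ p.2.val = r then (r:ℚ)+2 else 1)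
        * (if p.1.val = 0 ∧ p.2.val ≠ r then (p.2.val:ℚ)+1 else 1)
        * (if p.1.val ≠ 0 ∧ p.2.val = r then (r:ℚ) - (p.1.val:ℚ) + 1 else 1) := by
    intro p hp
    simp only [Finset.mem_filter, Finset.mem_univ, true_and] at hp
    have hab : p.1.val < p.2.val := hp
    have hy : p.2.val < r + 1 := p.2.isLt
    by_cases h1 : p.1.val = 0 <;> by_cases h2 : p.2.val = r
    · rw [if_pos h1, if_neg (by omega : ¬ p.2.val = 0), if_pos h2,
        if_pos (show p.1.val = 0 ∧ p.2.val = r from ⟨h1, h2⟩),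
        if_pos (show p.1.val = 0 ∧ p.2.val = r from ⟨h1, h2⟩),
        if_neg (show ¬(p.1.val = 0 ∧ p.2.val ≠ r) from fun h => h.2 h2),
        if_neg (show ¬(p.1.val = 0 ∧ p.2.val ≠ r) from fun h => h.2 h2),
        if_neg (show ¬(p.1.val ≠ 0 ∧ p.2.val = r) from fun h => h.1 h1),
        if_neg (show ¬(p.1.val ≠ 0 ∧ p.2.val = r) from fun h => h.1 h1), h1, h2]
      push_cast; ring
    · rw [if_pos h1, if_neg (by omega : ¬ p.2.val = 0), if_neg h2,
        if_neg (show ¬(p.1.val = 0 ∧ p.2.val = r) from fun h => h2 h.2),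
        if_neg (show ¬(p.1.val = 0 ∧ p.2.val = r) from fun h => h2 h.2),
        if_pos (show p.1.val = 0 ∧ p.2.val ≠ r from ⟨h1, h2⟩),
        if_pos (show p.1.val = 0 ∧ p.2.val ≠ r from ⟨h1, h2⟩),
        if_neg (show ¬(p.1.val ≠ 0 ∧ p.2.val = r) from fun h => h.1 h1),
        if_neg (show ¬(p.1.val ≠ 0 ∧ p.2.val = r) from fun h => h.1 h1), h1]
      push_cast; ring
    · rw [if_neg h1, if_neg (by omega : ¬ p.1.val = r), if_neg (by omega : ¬ p.2.val = 0), if_pos h2,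
        if_neg (show ¬(p.1.val = 0 ∧ p.2.val = r) from fun h => h1 h.1),
        if_neg (show ¬(p.1.val = 0 ∧ p.2.val = r) from fun h => h1 h.1),
        if_neg (show ¬(p.1.val = 0 ∧ p.2.val ≠ r) from fun h => h1 h.1),
        if_neg (show ¬(p.1.val = 0 ∧ p.2.val ≠ r) from fun h => h1 h.1),
        if_pos (show p.1.val ≠ 0 ∧ p.2.val = r from ⟨h1, h2⟩),
        if_pos (show p.1.val ≠ 0 ∧ p.2.val = r from ⟨h1, h2⟩), h2]
      push_cast; ring
    · rw [if_neg h1, if_neg (by omega : ¬ p.1.val = r), if_neg (by omega : ¬ p.2.val = 0), if_neg h2,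
        if_neg (show ¬(p.1.val = 0 ∧ p.2.val = r) from fun h => h1 h.1),
        if_neg (show ¬(p.1.val = 0 ∧ p.2.val = r) from fun h => h1 h.1),
        if_neg (show ¬(p.1.val = 0 ∧ p.2.val ≠ r) from fun h => h1 h.1),
        if_neg (show ¬(p.1.val = 0 ∧ p.2.val ≠ r) from fun h => h1 h.1),
        if_neg (show ¬(p.1.val ≠ 0 ∧ p.2.val = r) from fun h => h2 h.2),
        if_neg (show ¬(p.1.val ≠ 0 ∧ p.2.val = r) from fun h => h2 h.2)]
  have hprod := Finset.prod_congr rfl key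
  simp only [Finset.prod_mul_distrib] at hprod
  -- evaluate the auxiliary products
  have hu1 : (∏ p ∈ Finset.univ.filter (fun p : Fin (r+1) × Fin (r+1) => p.1 < p.2),
      (if p.1.val = 0 ∧ p.2.val = r then (r:ℚ) else 1)) = (r:ℚ) := ht_aux_pt r hr _
  have hv1 : (∏ p ∈ Finset.univ.filter (fun p : Fin (r+1) × Fin (r+1) => p.1 < p.2),
      (if p.1.val = 0 ∧ p.2.val = r then (r:ℚ)+2 else 1)) = (r:ℚ)+2 := ht_aux_pt r hr _
  have hu2 : (∏ p ∈ Finset.univ.filter (fun p : Fin (r+1) × Fin (r+1) => p.1 < p.2),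
      (if p.1.val = 0 ∧ p.2.val ≠ r then (p.2.val:ℚ) else 1)) = ((r-1).factorial : ℚ) := by
    rw [show ((r-1).factorial : ℚ) = ((∏ j ∈ Finset.Ico 1 r, j : ℕ) : ℚ) by
      rw [ht_prod_Ico_id r hr]]
    rw [Nat.cast_prod]
    exact ht_aux_snd r (fun m => (m:ℚ))
  have hv2 : (∏ p ∈ Finset.univ.filter (fun p : Fin (r+1) × Fin (r+1) => p.1 < p.2),
      (if p.1.val = 0 ∧ p.2.val ≠ r then (p.2.val:ℚ)+1 else 1)) = (r.factorial : ℚ) := by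
    rw [show (r.factorial : ℚ) = ((∏ j ∈ Finset.Ico 1 r, (j+1) : ℕ) : ℚ) by
      rw [ht_prod_Ico_succ r hr]]
    rw [Nat.cast_prod]
    push_cast
    exact ht_aux_snd r (fun m => (m:ℚ)+1)
  have hu3 : (∏ p ∈ Finset.univ.filter (fun p : Fin (r+1) × Fin (r+1) => p.1 < p.2),
      (if p.1.val ≠ 0 ∧ p.2.val = r then (r:ℚ) - (p.1.val:ℚ) else 1)) = ((r-1).factorial : ℚ) := by
    have e : ∀ l ∈ Finset.Ico 1 r, (r:ℚ) - (l:ℚ) = (((r - l : ℕ)) : ℚ) := by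
      intro l hl
      simp only [Finset.mem_Ico] at hl
      rw [Nat.cast_sub (by omega)]
    calc (∏ p ∈ Finset.univ.filter (fun p : Fin (r+1) × Fin (r+1) => p.1 < p.2),
        (if p.1.val ≠ 0 ∧ p.2.val = r then (r:ℚ) - (p.1.val:ℚ) else 1))
        = ∏ l ∈ Finset.Ico 1 r, ((r:ℚ) - (l:ℚ)) := ht_aux_fst r (fun m => (r:ℚ) - (m:ℚ))
      _ = ∏ l ∈ Finset.Ico 1 r, (((r - l : ℕ)) : ℚ) := Finset.prod_congr rfl e
      _ = ((∏ l ∈ Finset.Ico 1 r, (r - l) : ℕ) : ℚ) := (Nat.cast_prod _ _).symm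
      _ = ((r-1).factorial : ℚ) := by rw [ht_prod_Ico_sub r hr]
  have hv3 : (∏ p ∈ Finset.univ.filter (fun p : Fin (r+1) × Fin (r+1) => p.1 < p.2),
      (if p.1.val ≠ 0 ∧ p.2.val = r then (r:ℚ) - (p.1.val:ℚ) + 1 else 1)) = (r.factorial : ℚ) := by
    have e : ∀ l ∈ Finset.Ico 1 r, (r:ℚ) - (l:ℚ) + 1 = (((r - l + 1 : ℕ)) : ℚ) := by
      intro l hl
      simp only [Finset.mem_Ico] at hl
      push_cast [Nat.cast_sub (by omega : l ≤ r)]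
      ring
    calc (∏ p ∈ Finset.univ.filter (fun p : Fin (r+1) × Fin (r+1) => p.1 < p.2),
        (if p.1.val ≠ 0 ∧ p.2.val = r then (r:ℚ) - (p.1.val:ℚ) + 1 else 1))
        = ∏ l ∈ Finset.Ico 1 r, ((r:ℚ) - (l:ℚ) + 1) := ht_aux_fst r (fun m => (r:ℚ) - (m:ℚ) + 1)
      _ = ∏ l ∈ Finset.Ico 1 r, (((r - l + 1 : ℕ)) : ℚ) := Finset.prod_congr rfl e
      _ = ((∏ l ∈ Finset.Ico 1 r, (r - l + 1) : ℕ) : ℚ) := (Nat.cast_prod _ _).symm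
      _ = (r.factorial : ℚ) := by rw [ht_prod_Ico_sub_succ r hr]
  rw [hu1, hu2, hu3, hv1, hv2, hv3] at hprod
  have hqne : ((r-1).factorial : ℚ) ≠ 0 := Nat.cast_ne_zero.mpr (Nat.factorial_pos _).ne'
  have hfac : (r.factorial : ℚ) = (r:ℚ) * ((r-1).factorial : ℚ) := by
    rw [← Nat.mul_factorial_pred (show r ≠ 0 by omega)]
    push_cast; ring
  have hNum : (∏ p ∈ Finset.univ.filter (fun p : Fin (r+1) × Fin (r+1) => p.1 < p.2),
      (((if p.1.val = 0 then (2:ℕ) else if p.1.val = r then 0 else 1 : ℕ) : ℚ)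
          - ((if p.2.val = 0 then (2:ℕ) else if p.2.val = r then 0 else 1 : ℕ) : ℚ)
          + (p.2.val : ℚ) - (p.1.val : ℚ)))
      = (r:ℚ) * ((r:ℚ)+2) * (∏ p ∈ Finset.univ.filter (fun p : Fin (r+1) × Fin (r+1) => p.1 < p.2),
        (((1:ℕ):ℚ) - ((1:ℕ):ℚ) + (p.2.val : ℚ) - (p.1.val : ℚ))) := by
    apply mul_right_cancel₀ (show ((r:ℚ) * ((r-1).factorial : ℚ) * ((r-1).factorial : ℚ)) ≠ 0 from
      mul_ne_zero (mul_ne_zero hrQ hqne) hqne)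
    rw [hfac] at hprod
    linear_combination hprod
  -- denominator identity
  have keyD : ∀ j : Fin (r+1),
      ((((s + r + if j.val = 0 then 2 else if j.val = r then 0 else 1) - (j.val + 1)).factorial : ℚ))
        * (if j = Fin.last r then (s:ℚ) else 1)
      = (((s + r + 1 - (j.val + 1)).factorial : ℚ))
        * (if j = (0 : Fin (r+1)) then (s:ℚ)+(r:ℚ)+1 else 1) := by
    intro j
    have hjlt : j.val < r + 1 := j.isLt
    by_cases hj0 : j.val = 0
    · have hne : j ≠ Fin.last r := by
        intro h; rw [h] at hj0; simp only [Fin.val_last] at hj0; omega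
      have he0 : j = (0 : Fin (r+1)) := Fin.ext (by simpa using hj0)
      rw [if_pos hj0, if_neg hne, if_pos he0, hj0,
        show s + r + 2 - (0 + 1) = (s + r) + 1 by omega,
        show s + r + 1 - (0 + 1) = s + r by omega, Nat.factorial_succ]
      push_cast; ring
    · by_cases hjr : j.val = r
      · have hla : j = Fin.last r := by
          rw [Fin.ext_iff, Fin.val_last]; exact hjr
        have hne0 : j ≠ (0 : Fin (r+1)) := by
          rw [ne_eq, Fin.ext_iff, Fin.val_zero]; exact hj0
        rw [if_neg hj0, if_pos hjr, if_pos hla, if_neg hne0, hjr,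
          show s + r + 0 - (r + 1) = s - 1 by omega,
          show s + r + 1 - (r + 1) = s by omega,
          ← Nat.mul_factorial_pred (show s ≠ 0 by omega)]
        push_cast; ring
      · have hne : j ≠ Fin.last r := by
          rw [ne_eq, Fin.ext_iff, Fin.val_last]; exact hjr
        have hne0 : j ≠ (0 : Fin (r+1)) := by
          rw [ne_eq, Fin.ext_iff, Fin.val_zero]; exact hj0
        rw [if_neg hj0, if_neg hjr, if_neg hne, if_neg hne0]
  have hprodD := Finset.prod_congr (rfl : (Finset.univ : Finset (Fin (r+1))) = Finset.univ) (fun j _ => keyD j)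
  simp only [Finset.prod_mul_distrib, Finset.prod_ite_eq', Finset.mem_univ, if_true] at hprodD
  have hDen : (s:ℚ) * ∏ j : Fin (r+1),
      ((((s + r + if j.val = 0 then 2 else if j.val = r then 0 else 1) - (j.val + 1)).factorial : ℚ))
      = ((s:ℚ)+(r:ℚ)+1) * ∏ j : Fin (r+1), (((s + r + 1 - (j.val + 1)).factorial : ℚ)) := by
    linear_combination hprodD
  have hB : (∏ j : Fin (r+1),
      ((((s + r + if j.val = 0 then 2 else if j.val = r then 0 else 1) - (j.val + 1)).factorial : ℚ))) ≠ 0 :=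
    Finset.prod_ne_zero_iff.mpr (fun j _ => Nat.cast_ne_zero.mpr (Nat.factorial_pos _).ne')
  have hD : (∏ j : Fin (r+1), (((s + r + 1 - (j.val + 1)).factorial : ℚ))) ≠ 0 :=
    Finset.prod_ne_zero_iff.mpr (fun j _ => Nat.cast_ne_zero.mpr (Nat.factorial_pos _).ne')
  have main : ∀ A B C D : ℚ, A = (r:ℚ) * ((r:ℚ)+2) * C → (s:ℚ) * B = ((s:ℚ)+(r:ℚ)+1) * D →
      B ≠ 0 → D ≠ 0 → A / B = ((r : ℚ) * ((r:ℚ) + 2) * (s:ℚ) / ((s:ℚ) + (r:ℚ) + 1)) * (C / D) := by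
    intro A B C D h1 h2 hB hD
    have hs' : (s:ℚ) ≠ 0 := Nat.cast_ne_zero.mpr (by omega)
    have hsr : ((s:ℚ)+(r:ℚ)+1) ≠ 0 := by positivity
    subst h1
    field_simp
    linear_combination (-C) * h2
  exact main _ _ _ _ hNum hDen hB hD
end

section
/- Fix integers r ≥ 1, s ≥ 1 and define F(i₁, …, i_{r+1}) := ( ∏_{1 ≤ l < j ≤ r+1} (i_l − i_j + j − l) ) / ( ∏_{j=1}^{r+1} (s + r + i_j − j)! ). Then F(1, 1, …, 1, 0) = (r+1)·s · F(1, 1, …, 1), where the first tuple has r ones followed by a zero. -/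
open Finset

lemma pair_split (n : ℕ) (f : Fin (n+1) × Fin (n+1) → ℚ) :
    ∏ p ∈ Finset.univ.filter (fun p : Fin (n+1) × Fin (n+1) => p.1 < p.2), f p
    = (∏ p ∈ Finset.univ.filter (fun p : Fin (n+1) × Fin (n+1) => p.1 < p.2 ∧ p.2 ≠ Fin.last n), f p)
      * ∏ a : Fin n, f (a.castSucc, Fin.last n) := by
  rw [← Finset.prod_filter_mul_prod_filter_not (Finset.univ.filter (fun p : Fin (n+1) × Fin (n+1) => p.1 < p.2)) (fun p => p.2 ≠ Fin.last n)]
  congr 1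
  · rw [Finset.filter_filter]
  · rw [Finset.filter_filter]
    rw [show (Finset.univ.filter (fun p : Fin (n+1) × Fin (n+1) => p.1 < p.2 ∧ ¬ p.2 ≠ Fin.last n))
        = (Finset.univ : Finset (Fin n)).image (fun a => (a.castSucc, Fin.last n)) by
      ext p
      simp only [Finset.mem_filter, Finset.mem_univ, true_and, Finset.mem_image, not_not]
      constructor
      · rintro ⟨h1, h2⟩
        have hlt : p.1.val < n := by
          have := h1; rw [h2] at this; exact this
        exact ⟨⟨p.1.val, hlt⟩, by
          ext <;> simp [Fin.castSucc, h2.symm]⟩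
      · rintro ⟨a, rfl⟩
        exact ⟨Fin.castSucc_lt_last a, rfl⟩]
    rw [Finset.prod_image]
    intro a _ b _ h
    simpa using congrArg Prod.fst h

lemma prod_shift (r : ℕ) :
    ∏ l ∈ Finset.range r, ((r:ℚ)+1-(l:ℚ)) = ((r:ℚ)+1) * ∏ l ∈ Finset.range r, ((r:ℚ)-(l:ℚ)) := by
  have A : ∏ l ∈ Finset.range r, ((r:ℚ)+1-(l:ℚ)) = ∏ l ∈ Finset.range r, ((l:ℚ)+2) := by
    rw [← Finset.prod_range_reflect (fun j => (j:ℚ)+2) r]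
    apply Finset.prod_congr rfl
    intro j hj
    rw [Finset.mem_range] at hj
    have h1 : (1:ℕ) + j ≤ r := by omega
    have : ((r - 1 - j : ℕ) : ℚ) = (r:ℚ) - 1 - (j:ℚ) := by
      rw [Nat.sub_sub, Nat.cast_sub h1]; push_cast; ring
    rw [this]; ring
  have B : ∏ l ∈ Finset.range r, ((r:ℚ)-(l:ℚ)) = ∏ l ∈ Finset.range r, ((l:ℚ)+1) := by
    rw [← Finset.prod_range_reflect (fun j => (j:ℚ)+1) r]
    apply Finset.prod_congr rfl
    intro j hj
    rw [Finset.mem_range] at hj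
    have h1 : (1:ℕ) + j ≤ r := by omega
    have : ((r - 1 - j : ℕ) : ℚ) = (r:ℚ) - 1 - (j:ℚ) := by
      rw [Nat.sub_sub, Nat.cast_sub h1]; push_cast; ring
    rw [this]; ring
  have C : ∏ l ∈ Finset.range r, ((l:ℚ)+2) = ((r:ℚ)+1) * ∏ l ∈ Finset.range r, ((l:ℚ)+1) := by
    have h1 := Finset.prod_range_succ' (fun l => (l:ℚ)+1) r
    have h2 := Finset.prod_range_succ (fun l => (l:ℚ)+1) r
    push_cast at h1 h2
    calc ∏ l ∈ Finset.range r, ((l:ℚ)+2)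
        = ∏ l ∈ Finset.range r, (((l:ℚ)+1)+1) := by apply Finset.prod_congr rfl; intros; ring
      _ = ((r:ℚ)+1) * ∏ l ∈ Finset.range r, ((l:ℚ)+1) := by
          rw [show (∏ l ∈ Finset.range r, (((l:ℚ)+1)+1)) = (∏ l ∈ Finset.range r, (((l:ℚ)+1)+1)) * ((0:ℚ)+1) by ring, ← h1, h2]
          ring
  rw [A, B, C]

/-- Harris–Tu intersection number identity:
`F(1,…,1,0) = (r+1)s · F(1,…,1)` (the tuple has `r` ones followed by a zero), where
`F(i) = (∏_{l<j} (i_l - i_j + j - l)) / (∏_j (s+r+i_j-j)!)`. -/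
theorem harris_tu_theta (r s : ℕ) (hr : 1 ≤ r) (hs : 1 ≤ s)
    (F : (Fin (r + 1) → ℕ) → ℚ)
    (hF : ∀ i : Fin (r + 1) → ℕ,
      F i = (∏ p ∈ Finset.univ.filter (fun p : Fin (r + 1) × Fin (r + 1) => p.1 < p.2),
          ((i p.1 : ℚ) - (i p.2 : ℚ) + (p.2.val : ℚ) - (p.1.val : ℚ))) /
        ∏ j : Fin (r + 1), ((Nat.factorial (s + r + i j - (j.val + 1)) : ℚ))) :
    F (fun j => if j.val = r then 0 else 1) = ((r : ℚ) + 1) * s * F (fun _ => 1) := by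
  set i₀ : Fin (r+1) → ℕ := fun j => if j.val = r then 0 else 1 with hi₀
  rw [hF i₀, hF (fun _ => 1)]
  rw [pair_split, pair_split, Fin.prod_univ_castSucc, Fin.prod_univ_castSucc]
  set K := ∏ p ∈ Finset.univ.filter (fun p : Fin (r+1) × Fin (r+1) => p.1 < p.2 ∧ p.2 ≠ Fin.last r),
      (((1:ℕ) : ℚ) - ((1:ℕ) : ℚ) + (p.2.val : ℚ) - (p.1.val : ℚ)) with hK
  -- identify the K-factors
  have hK0 : (∏ p ∈ Finset.univ.filter (fun p : Fin (r+1) × Fin (r+1) => p.1 < p.2 ∧ p.2 ≠ Fin.last r),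
      ((i₀ p.1 : ℚ) - (i₀ p.2 : ℚ) + (p.2.val : ℚ) - (p.1.val : ℚ))) = K := by
    apply Finset.prod_congr rfl
    intro p hp
    simp only [Finset.mem_filter, Finset.mem_univ, true_and] at hp
    obtain ⟨h1, h2⟩ := hp
    have hp2 : p.2.val ≠ r := fun h => h2 (Fin.ext (by simp [h]))
    have hp1 : p.1.val ≠ r := by
      have := h1
      rw [Fin.lt_iff_val_lt_val] at this
      omega
    simp [hi₀, hp1, hp2]
  rw [hK0]
  -- second numerator factors
  have hP0 : (∏ a : Fin r, ((i₀ a.castSucc : ℚ) - (i₀ (Fin.last r) : ℚ) + ((Fin.last r).val : ℚ) - (a.castSucc.val : ℚ)))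
      = ((r:ℚ)+1) * ∏ l ∈ Finset.range r, ((r:ℚ)-(l:ℚ)) := by
    rw [← prod_shift]
    rw [← Fin.prod_univ_eq_prod_range (fun l => (r:ℚ)+1-(l:ℚ)) r]
    apply Finset.prod_congr rfl
    intro a _
    have e1 : i₀ a.castSucc = 1 := if_neg (by simpa using Nat.ne_of_lt a.isLt)
    have e2 : i₀ (Fin.last r) = 0 := if_pos (Fin.val_last r)
    rw [e1, e2]
    simp only [Fin.coe_castSucc, Fin.val_last]
    push_cast
    ring
  have hP1 : (∏ a : Fin r, (((1:ℕ) : ℚ) - ((1:ℕ) : ℚ) + ((Fin.last r).val : ℚ) - (a.castSucc.val : ℚ)))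
      = ∏ l ∈ Finset.range r, ((r:ℚ)-(l:ℚ)) := by
    rw [← Fin.prod_univ_eq_prod_range (fun l => (r:ℚ)-(l:ℚ)) r]
    apply Finset.prod_congr rfl
    intro a _
    simp [Fin.val_last]
  rw [hP0, hP1]
  set P := ∏ l ∈ Finset.range r, ((r:ℚ)-(l:ℚ)) with hP
  -- denominators
  set M := ∏ j : Fin r, ((Nat.factorial (s + r + 1 - (j.val + 1)) : ℚ)) with hM
  have hD0 : (∏ j : Fin r, ((Nat.factorial (s + r + i₀ j.castSucc - (j.castSucc.val + 1)) : ℚ))) = M := by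
    apply Finset.prod_congr rfl
    intro j _
    have e1 : i₀ j.castSucc = 1 := if_neg (by simpa using Nat.ne_of_lt j.isLt)
    rw [e1]
    simp only [Fin.coe_castSucc]
  have hD1 : (∏ j : Fin r, ((Nat.factorial (s + r + (1:ℕ) - (j.castSucc.val + 1)) : ℚ))) = M := by
    apply Finset.prod_congr rfl
    intro j _
    norm_num
  have hlast0 : s + r + i₀ (Fin.last r) - ((Fin.last r).val + 1) = s - 1 := by
    have e2 : i₀ (Fin.last r) = 0 := if_pos (Fin.val_last r)
    rw [e2, Fin.val_last]
    omega
  have hlast1 : s + r + (1:ℕ) - ((Fin.last r).val + 1) = s := by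
    rw [Fin.val_last]
    omega
  rw [hD0, hD1, hlast0, hlast1]
  have hfact : (Nat.factorial s : ℚ) = (s:ℚ) * (Nat.factorial (s-1) : ℚ) := by
    obtain ⟨t, rfl⟩ : ∃ t, s = t + 1 := ⟨s - 1, by omega⟩
    push_cast [Nat.factorial_succ]
    ring
  rw [hfact]
  have hMne : M ≠ 0 := by
    rw [hM]
    apply Finset.prod_ne_zero_iff.mpr
    intro j _
    exact_mod_cast Nat.factorial_ne_zero _
  have hsne : (s:ℚ) ≠ 0 := by positivity
  have hfne : (Nat.factorial (s-1) : ℚ) ≠ 0 := by exact_mod_cast Nat.factorial_ne_zero _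
  field_simp
end

section
/- Fix integers r ≥ 2, s ≥ 1 and define F(i₁, …, i_{r+1}) := ( ∏_{1 ≤ l < j ≤ r+1} (i_l − i_j + j − l) ) / ( ∏_{j=1}^{r+1} (s + r + i_j − j)! ). Then F(1, …, 1, 0, 0, 0) = ( (r+1)r(r−1)s(s+1)(s+2) / 6 ) · F(1, 1, …, 1), where the first tuple consists of r−2 ones followed by three zeros. -/
open Finset

lemma ht_pairProd {n : ℕ} (f : Fin n × Fin n → ℚ) (t : ℕ → ℕ → ℚ)
    (h : ∀ a b : Fin n, f (a, b) = t a b) :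
    ∏ p ∈ Finset.univ.filter (fun p : Fin n × Fin n => p.1 < p.2), f p
      = ∏ a ∈ Finset.range n, ∏ b ∈ Finset.range n, if a < b then t a b else 1 := by
  rw [Finset.prod_filter, ← Finset.univ_product_univ, Finset.prod_product]
  rw [← Fin.prod_univ_eq_prod_range (fun a => ∏ b ∈ Finset.range n, if a < b then t a b else 1)]
  refine Finset.prod_congr rfl (fun a _ => ?_)
  rw [← Fin.prod_univ_eq_prod_range (fun b => if (a : ℕ) < b then t a b else 1)]
  refine Finset.prod_congr rfl (fun b _ => ?_)
  simp only [Fin.lt_def, h]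

lemma ht_finProd {n : ℕ} (f : Fin n → ℚ) (t : ℕ → ℚ) (h : ∀ j : Fin n, f j = t j) :
    ∏ j : Fin n, f j = ∏ j ∈ Finset.range n, t j := by
  rw [← Fin.prod_univ_eq_prod_range t]
  exact Finset.prod_congr rfl (fun j _ => h j)

lemma ht_telescope (M : ℕ) :
    ∏ j ∈ Finset.range M, (((j : ℚ) + 4) / ((j : ℚ) + 1))
      = ((M : ℚ) + 1) * ((M : ℚ) + 2) * ((M : ℚ) + 3) / 6 := by
  induction M with
  | zero => norm_num
  | succ M ih =>
    rw [Finset.prod_range_succ, ih]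
    have h1 : (M : ℚ) + 1 ≠ 0 := by positivity
    push_cast
    field_simp
    ring

lemma ht_ratio (m : ℕ) :
    ∏ a ∈ Finset.range (m + 3), ∏ b ∈ Finset.range (m + 3),
        (if a < b ∧ a < m ∧ m ≤ b then (((b : ℚ) - a + 1) / ((b : ℚ) - a)) else 1)
      = ((m : ℚ) + 1) * ((m : ℚ) + 2) * ((m : ℚ) + 3) / 6 := by
  have hinner : ∀ a ∈ Finset.range (m + 3),
      (∏ b ∈ Finset.range (m + 3),
        (if a < b ∧ a < m ∧ m ≤ b then (((b : ℚ) - a + 1) / ((b : ℚ) - a)) else 1))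
      = (if a < m then ((m : ℚ) - a + 3) / ((m : ℚ) - a) else 1) := by
    intro a _
    by_cases ham : a < m
    · rw [show m + 3 = (m + 2) + 1 by omega, Finset.prod_range_succ,
        show m + 2 = (m + 1) + 1 by omega, Finset.prod_range_succ,
        Finset.prod_range_succ]
      rw [Finset.prod_eq_one (fun b hb => by
        rw [Finset.mem_range] at hb
        rw [if_neg]; omega)]
      rw [if_pos ⟨by omega, ham, le_refl m⟩, if_pos ⟨by omega, ham, by omega⟩,
        if_pos ⟨by omega, ham, by omega⟩, if_pos ham]
      have ha : (a : ℚ) < m := by exact_mod_cast ham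
      have h0 : (0 : ℚ) < (m : ℚ) - a := by linarith
      push_cast
      have e0 : (m : ℚ) - a ≠ 0 := ne_of_gt h0
      have e1 : (m : ℚ) + 1 - a ≠ 0 := ne_of_gt (by linarith)
      have e2 : (m : ℚ) + 1 + 1 - a ≠ 0 := ne_of_gt (by linarith)
      rw [one_mul, div_mul_div_comm, div_mul_div_comm, div_eq_div_iff
        (mul_ne_zero (mul_ne_zero e0 e1) e2) e0]
      ring
    · rw [if_neg ham]
      exact Finset.prod_eq_one (fun b _ => by rw [if_neg]; omega)
  rw [Finset.prod_congr rfl hinner]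
  rw [show m + 3 = (m + 2) + 1 by omega, Finset.prod_range_succ,
    show m + 2 = (m + 1) + 1 by omega, Finset.prod_range_succ,
    Finset.prod_range_succ]
  rw [if_neg (by omega), if_neg (by omega), if_neg (by omega)]
  have hrefl := Finset.prod_range_reflect
    (fun a => if a < m then ((m : ℚ) - a + 3) / ((m : ℚ) - a) else 1) m
  rw [← hrefl]
  rw [Finset.prod_congr rfl (fun j hj => ?_), ht_telescope m]
  · ring
  · rw [Finset.mem_range] at hj
    split_ifs with h
    · have hc : ((m - 1 - j : ℕ) : ℚ) = (m : ℚ) - (j : ℚ) - 1 := by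
        have he : m - 1 - j = m - (j + 1) := by omega
        rw [he, Nat.cast_sub (by omega)]
        push_cast; ring
      rw [hc]
      have h1 : (j : ℚ) + 1 ≠ 0 := by positivity
      rw [div_eq_div_iff (by
          intro hx
          have h0 : (0 : ℚ) ≤ j := by positivity
          linarith) (by positivity)]
      ring
    · omega

lemma ht_num (m : ℕ) :
    ∏ a ∈ Finset.range (m + 3), ∏ b ∈ Finset.range (m + 3),
        (if a < b then ((if m ≤ a then (0 : ℚ) else 1) - (if m ≤ b then (0 : ℚ) else 1)
          + (b : ℚ) - (a : ℚ)) else 1)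
      = (((m : ℚ) + 1) * ((m : ℚ) + 2) * ((m : ℚ) + 3) / 6) *
        ∏ a ∈ Finset.range (m + 3), ∏ b ∈ Finset.range (m + 3),
          (if a < b then ((b : ℚ) - (a : ℚ)) else 1) := by
  have hsplit : ∀ a ∈ Finset.range (m + 3), ∀ b ∈ Finset.range (m + 3),
      (if a < b then ((if m ≤ a then (0 : ℚ) else 1) - (if m ≤ b then (0 : ℚ) else 1)
          + (b : ℚ) - (a : ℚ)) else 1)
      = (if a < b then ((b : ℚ) - (a : ℚ)) else 1) *
        (if a < b ∧ a < m ∧ m ≤ b then (((b : ℚ) - a + 1) / ((b : ℚ) - a)) else 1) := by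
    intro a _ b _
    by_cases hab : a < b
    · have hba : (a : ℚ) < b := by exact_mod_cast hab
      have hne : (b : ℚ) - a ≠ 0 := by intro h; linarith
      by_cases ha : a < m
      · have c1 : ¬ m ≤ a := by omega
        by_cases hb : m ≤ b
        · simp only [hab, ha, hb, c1, if_true, if_false, and_self, ite_true, ite_false,
            eq_self_iff_true, if_pos, if_neg, not_false_iff]
          field_simp
          ring
        · simp only [hab, hb, c1, if_true, if_false, and_false, false_and, and_true,
            ite_true, ite_false]
          ring
      · have c2 : m ≤ a := by omega
        have c3 : m ≤ b := by omega
        simp only [hab, ha, c2, c3, if_true, if_false, false_and, and_false, and_true,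
          ite_true, ite_false]
        ring
    · simp only [hab, if_false, false_and, ite_false, one_mul]
  rw [Finset.prod_congr rfl (fun a ha => Finset.prod_congr rfl (fun b hb => hsplit a ha b hb))]
  simp only [Finset.prod_mul_distrib]
  rw [ht_ratio m]
  ring

lemma ht_den (m s : ℕ) (hs : 1 ≤ s) :
    ∏ j ∈ Finset.range (m + 3), ((Nat.factorial (s + (m + 2) + 1 - (j + 1)) : ℚ))
      = ((s : ℚ) + 2) * ((s : ℚ) + 1) * (s : ℚ) *
        ∏ j ∈ Finset.range (m + 3),
          ((Nat.factorial (s + (m + 2) + (if m ≤ j then 0 else 1) - (j + 1)) : ℚ)) := by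
  have hpt : ∀ j ∈ Finset.range (m + 3),
      ((Nat.factorial (s + (m + 2) + 1 - (j + 1)) : ℚ))
      = (if m ≤ j then ((s + m + 2 - j : ℕ) : ℚ) else 1) *
        ((Nat.factorial (s + (m + 2) + (if m ≤ j then 0 else 1) - (j + 1)) : ℚ)) := by
    intro j hj
    rw [Finset.mem_range] at hj
    by_cases hmj : m ≤ j
    · rw [if_pos hmj, if_pos hmj]
      rw [show s + (m + 2) + 1 - (j + 1) = (s + m + 1 - j) + 1 by omega,
        show s + (m + 2) + 0 - (j + 1) = s + m + 1 - j by omega,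
        Nat.factorial_succ,
        show s + m + 2 - j = (s + m + 1 - j) + 1 by omega]
      push_cast
      ring
    · rw [if_neg hmj, if_neg hmj, one_mul]
  rw [Finset.prod_congr rfl hpt, Finset.prod_mul_distrib]
  congr 1
  rw [show m + 3 = (m + 2) + 1 by omega, Finset.prod_range_succ,
    show m + 2 = (m + 1) + 1 by omega, Finset.prod_range_succ,
    Finset.prod_range_succ]
  rw [Finset.prod_eq_one (fun j hj => by
    rw [Finset.mem_range] at hj
    rw [if_neg]; omega)]
  rw [if_pos (le_refl m), if_pos (by omega : m ≤ m + 1), if_pos (by omega : m ≤ m + 2)]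
  rw [show s + m + 2 - m = s + 2 by omega, show s + m + 2 - (m + 1) = s + 1 by omega,
    show s + m + 2 - (m + 2) = s by omega]
  push_cast
  ring

/-- Harris–Tu intersection number identity for `r ≥ 2`:
`F(1,…,1,0,0,0) = ((r+1)r(r-1)s(s+1)(s+2)/6) · F(1,…,1)` (the tuple has `r-2` ones
followed by three zeros), where
`F(i) = (∏_{l<j} (i_l - i_j + j - l)) / (∏_j (s+r+i_j-j)!)`. -/
theorem harris_tu_theta_cubed (r s : ℕ) (hr : 2 ≤ r) (hs : 1 ≤ s)
    (F : (Fin (r + 1) → ℕ) → ℚ)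
    (hF : ∀ i : Fin (r + 1) → ℕ,
      F i = (∏ p ∈ Finset.univ.filter (fun p : Fin (r + 1) × Fin (r + 1) => p.1 < p.2),
          ((i p.1 : ℚ) - (i p.2 : ℚ) + (p.2.val : ℚ) - (p.1.val : ℚ))) /
        ∏ j : Fin (r + 1), ((Nat.factorial (s + r + i j - (j.val + 1)) : ℚ))) :
    F (fun j => if r - 2 ≤ j.val then 0 else 1) =
      (((r : ℚ) + 1) * r * (r - 1) * s * (s + 1) * (s + 2) / 6) * F (fun _ => 1) := by
  obtain ⟨m, rfl⟩ : ∃ m, r = m + 2 := ⟨r - 2, by omega⟩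
  rw [hF, hF]
  simp only [Nat.add_sub_cancel, Nat.cast_ite, Nat.cast_zero, Nat.cast_one, sub_self, zero_add]
  have h1 : (∏ p ∈ Finset.univ.filter
        (fun p : Fin (m + 2 + 1) × Fin (m + 2 + 1) => p.1 < p.2),
        ((if m ≤ (p.1 : ℕ) then (0 : ℚ) else 1) - (if m ≤ (p.2 : ℕ) then (0 : ℚ) else 1)
          + ((p.2 : ℕ) : ℚ) - ((p.1 : ℕ) : ℚ)))
      = ∏ a ∈ Finset.range (m + 3), ∏ b ∈ Finset.range (m + 3),
          (if a < b then ((if m ≤ a then (0 : ℚ) else 1) - (if m ≤ b then (0 : ℚ) else 1)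
            + (b : ℚ) - (a : ℚ)) else 1) :=
    ht_pairProd _ _ (fun a b => rfl)
  have h2 : (∏ p ∈ Finset.univ.filter
        (fun p : Fin (m + 2 + 1) × Fin (m + 2 + 1) => p.1 < p.2),
        (((p.2 : ℕ) : ℚ) - ((p.1 : ℕ) : ℚ)))
      = ∏ a ∈ Finset.range (m + 3), ∏ b ∈ Finset.range (m + 3),
          (if a < b then ((b : ℚ) - (a : ℚ)) else 1) :=
    ht_pairProd _ _ (fun a b => rfl)
  have h3 : (∏ j : Fin (m + 2 + 1),
        ((Nat.factorial (s + (m + 2) + (if m ≤ (j : ℕ) then 0 else 1) - ((j : ℕ) + 1)) : ℚ)))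
      = ∏ j ∈ Finset.range (m + 3),
          ((Nat.factorial (s + (m + 2) + (if m ≤ j then 0 else 1) - (j + 1)) : ℚ)) :=
    ht_finProd _ _ (fun j => rfl)
  have h4 : (∏ j : Fin (m + 2 + 1),
        ((Nat.factorial (s + (m + 2) + 1 - ((j : ℕ) + 1)) : ℚ)))
      = ∏ j ∈ Finset.range (m + 3),
          ((Nat.factorial (s + (m + 2) + 1 - (j + 1)) : ℚ)) :=
    ht_finProd _ _ (fun j => rfl)
  rw [h1, h2, h3, h4, ht_num m, ht_den m s hs]
  have hD : (∏ j ∈ Finset.range (m + 3),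
      ((Nat.factorial (s + (m + 2) + (if m ≤ j then 0 else 1) - (j + 1)) : ℚ))) ≠ 0 :=
    Finset.prod_ne_zero_iff.mpr (fun j _ => Nat.cast_ne_zero.mpr (Nat.factorial_ne_zero _))
  have hs0 : (s : ℚ) ≠ 0 := Nat.cast_ne_zero.mpr (by omega)
  have hs1 : (s : ℚ) + 1 ≠ 0 := by positivity
  have hs2 : (s : ℚ) + 2 ≠ 0 := by positivity
  field_simp
  push_cast
  ring
end
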